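/- Let f : ℝⁿ → ℝⁿ be continuously differentiable and S = diag(s) a signature matrix with associated orthant order z₁ ≤_S z₂ ⟺ S(z₂ − z₁) ≥ 0 componentwise. If S (∂f/∂z)(z) S ≥ 0 entrywise for all z ∈ ℝⁿ, then f is monotone with respect to ≤_S: z₁ ≤_S z₂ implies f(z₁) ≤_S f(z₂). -/

import Mathlib

open Matrix BigOperators

theorem jacobian_balance_implies_monotone {n : ℕ}
    (f : (Fin n → ℝ) → (Fin n → ℝ)) (hf : ContDiff ℝ 1 f)
    (s : Fin n → ℝ) (hs : ∀ i, s i = 1 ∨ s i = -1)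
    (hJac : ∀ z : Fin n → ℝ, ∀ i j, 0 ≤ s i * (fderiv ℝ f z (Pi.single j 1) i) * s j) :
    ∀ z₁ z₂ : Fin n → ℝ, (∀ i, 0 ≤ s i * (z₂ i - z₁ i)) →
      ∀ i, 0 ≤ s i * (f z₂ i - f z₁ i) := by
  intro z₁ z₂ h12 i
  set v : Fin n → ℝ := fun j => z₂ j - z₁ j with hv
  have hs2 : ∀ j, s j * s j = 1 := by
    intro j; rcases hs j with h | h <;> simp [h]
  -- key pointwise nonnegativity of directional derivative
  have hkey : ∀ z : Fin n → ℝ, 0 ≤ s i * (fderiv ℝ f z v i) := by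
    intro z
    have hvsum : v = ∑ j, v j • (Pi.single j 1 : Fin n → ℝ) := by
      ext k
      simp [Finset.sum_apply, Pi.single_apply, Finset.sum_ite_eq, mul_comm]
    have : fderiv ℝ f z v = ∑ j, v j • fderiv ℝ f z (Pi.single j 1) := by
      conv_lhs => rw [hvsum]
      simp only [map_sum, _root_.map_smul]
    rw [this]
    have : (∑ j, v j • fderiv ℝ f z (Pi.single j 1)) i
        = ∑ j, v j * fderiv ℝ f z (Pi.single j 1) i := by
      simp [Finset.sum_apply]
    rw [this, Finset.mul_sum]
    apply Finset.sum_nonneg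
    intro j _
    have h1 := hJac z i j
    have h2 := h12 j
    have : s i * (v j * fderiv ℝ f z (Pi.single j 1) i)
        = (s i * fderiv ℝ f z (Pi.single j 1) i * s j) * (s j * v j) := by
      linear_combination (-(s i * fderiv ℝ f z (Pi.single j 1) i * v j)) * hs2 j
    rw [this]
    exact mul_nonneg h1 h2
  -- define F t = s i * f (z₁ + t • v) i and show monotone
  have hdiff := hf.differentiable one_ne_zero
  set F : ℝ → ℝ := fun t => s i * f (z₁ + t • v) i with hF
  have hFd : ∀ t : ℝ, HasDerivAt F (s i * (fderiv ℝ f (z₁ + t • v) v i)) t := by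
    intro t
    have hγ : HasDerivAt (fun t : ℝ => z₁ + t • v) v t := by
      simpa using ((hasDerivAt_id t).smul_const v).const_add z₁
    have hc : HasDerivAt (fun t : ℝ => f (z₁ + t • v))
        (fderiv ℝ f (z₁ + t • v) v) t :=
      (hdiff (z₁ + t • v)).hasFDerivAt.comp_hasDerivAt t hγ
    have hci : HasDerivAt (fun t : ℝ => f (z₁ + t • v) i)
        (fderiv ℝ f (z₁ + t • v) v i) t := by
      have := ((ContinuousLinearMap.proj i :
          (Fin n → ℝ) →L[ℝ] ℝ).hasFDerivAt).comp_hasDerivAt t hc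
      exact this
    simpa [hF] using hci.const_mul (s i)
  have hmono : Monotone F := by
    apply monotone_of_deriv_nonneg
    · exact fun t => (hFd t).differentiableAt
    · intro t
      rw [(hFd t).deriv]
      exact hkey _
  have h01 : F 0 ≤ F 1 := hmono zero_le_one
  have e0 : F 0 = s i * f z₁ i := by simp [hF]
  have e1 : F 1 = s i * f z₂ i := by
    have : z₁ + (1 : ℝ) • v = z₂ := by
      ext k; simp [hv]
    show s i * f (z₁ + (1:ℝ) • v) i = _
    rw [this]
  have := h01
  rw [e0, e1] at this
  linarith [mul_sub (s i) (f z₂ i) (f z₁ i), this]
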